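/- arXiv:1906.07447 — 2 statements merged into one kernel-verified Lean document; each statement's English description precedes it below -/
import Mathlib

section
/- Let G = A ⋊ Z/2 with A a finite abelian group of odd order, Z/2 acting by inversion, and let c ⊂ G be the conjugacy class of involutions. Then the pair (G, c) has the non-splitting property: for every subgroup H ≤ G, the intersection c ∩ H is either empty or is a single conjugacy class of H. -/
/-- In any group, two elements of square one whose product has odd order are conjugate. -/
lemma isConj_of_sq_eq_one {G : Type*} [Group G] {a b : G} (ha : a ^ 2 = 1) (hb : b ^ 2 = 1)
    (hodd : Odd (orderOf (a * b))) : IsConj a b := by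
  obtain ⟨m, hm⟩ := hodd
  set u := a * b with hu
  have ha' : a * a = 1 := by rw [← sq]; exact ha
  have hb' : b * b = 1 := by rw [← sq]; exact hb
  have hb'' : u⁻¹ * a = b := by
    have : u * b = a := by rw [hu, mul_assoc, hb', mul_one]
    rw [← this]; group
  have h1 : a * u = u⁻¹ * a := by
    rw [hb'', hu, ← mul_assoc, ha', one_mul]
  have key : ∀ k : ℕ, a * u ^ k = (u ^ k)⁻¹ * a := by
    intro k
    induction k with
    | zero => simp
    | succ n ih =>
      rw [pow_succ', ← mul_assoc, h1, mul_assoc, ih, ← mul_assoc, ← mul_inv_rev, ← pow_succ,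
        pow_succ']
  have h2 : u ^ (2 * m + 1) = 1 := by rw [← hm]; exact pow_orderOf_eq_one u
  have h3 : (u ^ (m + 1))⁻¹ = u ^ m := by
    rw [inv_eq_iff_mul_eq_one, ← pow_add, show m + 1 + m = 2 * m + 1 by ring]
    exact h2
  have eq1 : u ^ m * a = b * u ^ m := by
    rw [← hb'', mul_assoc, key m, ← mul_assoc, ← mul_inv_rev, ← pow_succ, h3]
  rw [isConj_iff]
  exact ⟨u ^ m, by rw [eq1, mul_assoc, mul_inv_cancel, mul_one]⟩

def invAut (A : Type*) [CommGroup A] : Multiplicative (ZMod 2) →* MulAut A where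
  toFun x := (MulEquiv.inv A : MulAut A) ^ (Multiplicative.toAdd x).val
  map_one' := by simp
  map_mul' x y := by
    have h2 : (MulEquiv.inv A : MulAut A) ^ 2 = 1 := by
      ext a
      show a⁻¹⁻¹ = a
      exact inv_inv a
    show (MulEquiv.inv A : MulAut A) ^ (Multiplicative.toAdd x + Multiplicative.toAdd y).val = _
    rw [ZMod.val_add, ← pow_eq_pow_mod _ h2, pow_add]

section Aux

variable (A : Type*) [CommGroup A] [Fintype A]

local notation "σ" => Multiplicative.ofAdd (1 : ZMod 2)

abbrev myG := SemidirectProduct A (Multiplicative (ZMod 2)) (invAut A)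

omit [Fintype A] in
lemma invAut_sigma (a : A) : invAut A σ a = a⁻¹ := by
  show ((MulEquiv.inv A : MulAut A) ^ (Multiplicative.toAdd σ).val) a = a⁻¹
  have : (Multiplicative.toAdd σ).val = 1 := rfl
  rw [this, pow_one]
  rfl

lemma zmod2_cases (x : Multiplicative (ZMod 2)) : x = 1 ∨ x = σ := by
  revert x; decide

variable {A}

lemma odd_orderOf_of_right_eq_one (hA : Odd (Fintype.card A)) {g : myG A}
    (h : g.right = 1) : Odd (orderOf g) := by
  have hg : g = SemidirectProduct.inl g.left := by
    apply SemidirectProduct.ext <;> simp [h]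
  have h1 : orderOf g = orderOf g.left := by
    rw [hg]; exact orderOf_injective _ SemidirectProduct.inl_injective _
  rw [h1]
  rcases Nat.even_or_odd (orderOf g.left) with he | ho
  · exfalso
    have : (2 : ℕ) ∣ Fintype.card A := dvd_trans (even_iff_two_dvd.mp he) orderOf_dvd_card
    rw [Nat.odd_iff] at hA
    omega
  · exact ho

lemma myOrderOf_eq_two_iff (hA : Odd (Fintype.card A)) (g : myG A) :
    orderOf g = 2 ↔ g.right = σ := by
  constructor
  · intro h2
    rcases zmod2_cases g.right with h | h
    · exfalso
      have := odd_orderOf_of_right_eq_one hA h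
      rw [h2] at this
      simp [Nat.odd_iff] at this
    · exact h
  · intro h
    have hsq : g ^ 2 = 1 := by
      rw [sq]
      apply SemidirectProduct.ext
      · rw [SemidirectProduct.mul_left, h, invAut_sigma, mul_inv_cancel]; rfl
      · rw [SemidirectProduct.mul_right, h, SemidirectProduct.one_right]; decide
    have hne : g ≠ 1 := by
      intro hg
      rw [hg, SemidirectProduct.one_right] at h
      revert h; decide
    exact orderOf_eq_prime hsq hne

end Aux

/-- Let `G = A ⋊ ℤ/2` with `A` a finite abelian group of odd order, `ℤ/2`
acting by inversion, and `c ⊆ G` the conjugacy class of involutions. Then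
`(G, c)` has the non-splitting property: `c` generates `G`, and for every
subgroup `H ≤ G` the intersection `c ∩ H` is either empty or a single
conjugacy class of `H`. -/
theorem involutions_non_splitting (A : Type*) [CommGroup A] [Fintype A]
    (hA : Odd (Fintype.card A)) :
    let G := SemidirectProduct A (Multiplicative (ZMod 2)) (invAut A)
    Subgroup.closure {g : G | orderOf g = 2} = ⊤ ∧
    ∀ H : Subgroup G,
      {h : H | orderOf (h : G) = 2} = ∅ ∨
      ∃ h₀ : H, orderOf (h₀ : G) = 2 ∧
        {h : H | orderOf (h : G) = 2} = {h : H | IsConj h₀ h} := by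
  intro G
  constructor
  · rw [eq_top_iff]
    rintro g -
    set s : G := ⟨1, Multiplicative.ofAdd (1 : ZMod 2)⟩ with hs_def
    have hs : orderOf s = 2 := (myOrderOf_eq_two_iff hA s).mpr rfl
    rcases zmod2_cases g.right with h | h
    · have hgs : orderOf (g * s) = 2 := by
        rw [myOrderOf_eq_two_iff hA, SemidirectProduct.mul_right, h, one_mul]
      have : g = (g * s) * s⁻¹ := (mul_inv_cancel_right g s).symm
      rw [this]
      exact mul_mem (Subgroup.subset_closure hgs) (inv_mem (Subgroup.subset_closure hs))
    · exact Subgroup.subset_closure ((myOrderOf_eq_two_iff hA g).mpr h)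
  · intro H
    by_cases hne : {h : H | orderOf (h : G) = 2} = ∅
    · exact Or.inl hne
    · right
      obtain ⟨h₀, hh₀⟩ := Set.nonempty_iff_ne_empty.mpr hne
      refine ⟨h₀, hh₀, ?_⟩
      ext h
      simp only [Set.mem_setOf_eq]
      constructor
      · intro hh
        have sq_one : ∀ x : H, orderOf (x : G) = 2 → x ^ 2 = 1 := by
          intro x hx
          have : (x : G) ^ 2 = 1 := by
            have h1 := pow_orderOf_eq_one (x : G); rw [hx] at h1; exact h1
          exact Subtype.ext (by push_cast; exact this)
        apply isConj_of_sq_eq_one (sq_one h₀ hh₀) (sq_one h hh)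
        have hright : ((h₀ * h : H) : G).right = 1 := by
          push_cast
          rw [SemidirectProduct.mul_right,
            (myOrderOf_eq_two_iff hA _).mp hh₀, (myOrderOf_eq_two_iff hA _).mp hh]
          decide
        rw [← Subgroup.orderOf_coe]
        exact odd_orderOf_of_right_eq_one hA hright
      · intro hc
        obtain ⟨c, hc⟩ := hc
        have : SemiconjBy ((c : ↥H) : G) (h₀ : G) (h : G) := by
          have := congrArg (Subgroup.subtype H) hc
          push_cast at this
          exact this
        rw [← this.orderOf_eq _]
        exact hh₀
end

section
/- Let G be a group, c ⊆ G conjugation-invariant, and suppose the tuple (g_1,…,g_n) ∈ c^n has trivial global monodromy, i.e. g_1 g_2 ⋯ g_n = 1. Then for any tuple (h_1,…,h_m) ∈ c^m, the concatenations (g_1,…,g_n,h_1,…,h_m) and (h_1,…,h_m,g_1,…,g_n) are equivalent under the braid group action on c^{n+m} (the equivalence relation generated by the elementary braid moves). -/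
/-- The `i`-th elementary braid operation on tuples:
`σ_i(g_1,…,g_n) = (g_1,…,g_{i-1}, g_i g_{i+1} g_i⁻¹, g_i, g_{i+2},…,g_n)`. -/
def braidMove {G : Type*} [Group G] {n : ℕ} (i : ℕ) (hi : i + 1 < n)
    (g : Fin n → G) : Fin n → G :=
  fun j =>
    if (j : ℕ) = i then
      g ⟨i, Nat.lt_of_succ_lt hi⟩ * g ⟨i + 1, hi⟩ * (g ⟨i, Nat.lt_of_succ_lt hi⟩)⁻¹
    else if (j : ℕ) = i + 1 then g ⟨i, Nat.lt_of_succ_lt hi⟩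
    else g j


/-- The equivalence relation on tuples generated by the elementary braid moves. -/
def BraidEquiv {G : Type*} [Group G] {N : ℕ} : (Fin N → G) → (Fin N → G) → Prop :=
  Relation.EqvGen (fun a b => ∃ (i : ℕ) (hi : i + 1 < N), b = braidMove i hi a)

section Aux

variable {G : Type*} [Group G]

lemma braidMove_mk {n : ℕ} (i : ℕ) (hi : i + 1 < n) (f : Fin n → G) (k : ℕ) (hk : k < n) :
    braidMove i hi f ⟨k, hk⟩ =
      if k = i then
        f ⟨i, Nat.lt_of_succ_lt hi⟩ * f ⟨i + 1, hi⟩ * (f ⟨i, Nat.lt_of_succ_lt hi⟩)⁻¹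
      else if k = i + 1 then f ⟨i, Nat.lt_of_succ_lt hi⟩
      else f ⟨k, hk⟩ := rfl

lemma get_two {α : Type*} (l₁ l₂ : List α) (p q : α) (j : ℕ)
    (hj : j < (l₁ ++ p :: q :: l₂).length) :
    (l₁ ++ p :: q :: l₂)[j] =
      if hlt : j < l₁.length then l₁[j]
      else if h2 : j = l₁.length then p
      else if h3 : j = l₁.length + 1 then q
      else l₂[j - l₁.length - 2]'(by simp at hj; omega) := by
  rw [List.getElem_append]
  split_ifs with h1 h2 h3
  · rfl
  · have : j - l₁.length = 0 := by omega
    simp [this]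
  · have : j - l₁.length = 1 := by omega
    simp [this]
  · obtain ⟨k, hk⟩ : ∃ k, j - l₁.length = k + 2 := ⟨j - l₁.length - 2, by omega⟩
    simp [hk]

/-- Braid step on lists. -/
def LStep (l l' : List G) : Prop :=
  ∃ (l₁ : List G) (a b : G) (l₂ : List G),
    l = l₁ ++ a :: b :: l₂ ∧ l' = l₁ ++ (a * b * a⁻¹) :: a :: l₂

/-- Braid equivalence on lists. -/
def LEquiv : List G → List G → Prop := Relation.EqvGen LStep

lemma LStep.length {l l' : List G} (h : LStep l l') : l.length = l'.length := by
  obtain ⟨l₁, a, b, l₂, rfl, rfl⟩ := h; simp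

lemma LEquiv.length {l l' : List G} (h : LEquiv l l') : l.length = l'.length := by
  induction h with
  | rel _ _ h => exact h.length
  | refl => rfl
  | symm _ _ _ ih => exact ih.symm
  | trans _ _ _ _ _ ih1 ih2 => exact ih1.trans ih2

lemma LEquiv.refl' {l l' : List G} (h : l = l') : LEquiv l l' := h ▸ Relation.EqvGen.refl l

lemma LEquiv.trans' {l l' l'' : List G} (h : LEquiv l l') (h' : LEquiv l' l'') :
    LEquiv l l'' := Relation.EqvGen.trans _ _ _ h h'

lemma LStep.cong {l l' : List G} (h : LStep l l') (t s : List G) :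
    LStep (t ++ l ++ s) (t ++ l' ++ s) := by
  obtain ⟨l₁, a, b, l₂, rfl, rfl⟩ := h
  exact ⟨t ++ l₁, a, b, l₂ ++ s, by simp, by simp⟩

lemma LEquiv.cong {l l' : List G} (h : LEquiv l l') (t s : List G) :
    LEquiv (t ++ l ++ s) (t ++ l' ++ s) := by
  induction h with
  | rel _ _ h => exact Relation.EqvGen.rel _ _ (h.cong t s)
  | refl => exact Relation.EqvGen.refl _
  | symm _ _ _ ih => exact Relation.EqvGen.symm _ _ ih
  | trans _ _ _ _ _ ih1 ih2 => exact Relation.EqvGen.trans _ _ _ ih1 ih2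

/-- Move a single element past a list. -/
lemma moveOne (a : G) (l : List G) :
    LEquiv (a :: l) (l.map (fun x => a * x * a⁻¹) ++ [a]) := by
  induction l with
  | nil => exact LEquiv.refl' rfl
  | cons x l ih =>
    have s1 : LStep (a :: x :: l) ((a * x * a⁻¹) :: a :: l) :=
      ⟨[], a, x, l, rfl, rfl⟩
    have s2 : LEquiv ((a * x * a⁻¹) :: a :: l)
        ((a * x * a⁻¹) :: (l.map (fun x => a * x * a⁻¹) ++ [a])) := by
      simpa using ih.cong [a * x * a⁻¹] []
    exact LEquiv.trans' (Relation.EqvGen.rel _ _ s1)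
      (LEquiv.trans' s2 (LEquiv.refl' (by simp)))

/-- Move a list past a list. -/
lemma moveList (g h : List G) :
    LEquiv (g ++ h) (h.map (fun x => g.prod * x * g.prod⁻¹) ++ g) := by
  induction g with
  | nil => exact LEquiv.refl' (by simp)
  | cons a g ih =>
    have e1 : LEquiv (a :: (g ++ h))
        (a :: (h.map (fun x => g.prod * x * g.prod⁻¹) ++ g)) := by
      simpa using ih.cong [a] []
    have e2 : LEquiv (a :: (h.map (fun x => g.prod * x * g.prod⁻¹) ++ g))
        ((h.map (fun x => g.prod * x * g.prod⁻¹)).map (fun x => a * x * a⁻¹) ++ [a] ++ g) := by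
      simpa [List.append_assoc] using
        (moveOne a (h.map (fun x => g.prod * x * g.prod⁻¹))).cong [] g
    have e3 : (h.map (fun x => g.prod * x * g.prod⁻¹)).map (fun x => a * x * a⁻¹) ++ [a] ++ g
        = h.map (fun x => (a :: g).prod * x * (a :: g).prod⁻¹) ++ (a :: g) := by
      simp [List.map_map, Function.comp_def, mul_assoc, mul_inv_rev, List.append_assoc]
    exact LEquiv.trans' (LEquiv.trans' e1 e2) (LEquiv.refl' e3)

/-- Transfer list braid equivalence to `BraidEquiv` on tuples. -/
lemma lequiv_braidEquiv {N : ℕ} : ∀ {l l' : List G}, LEquiv l l' →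
    ∀ (f f' : Fin N → G), List.ofFn f = l → List.ofFn f' = l' → BraidEquiv f f' := by
  intro l l' e
  induction e with
  | rel x y hxy =>
    intro f f' hf hf'
    obtain ⟨l₁, a, b, l₂, rfl, rfl⟩ := hxy
    have hN : N = l₁.length + 2 + l₂.length := by
      have h1 := List.length_ofFn (f := f)
      rw [hf] at h1; simp at h1; omega
    have hi : l₁.length + 1 < N := by omega
    have hfj : ∀ (k : ℕ) (hk : k < N), f ⟨k, hk⟩ = (l₁ ++ a :: b :: l₂)[k]'(by simp; omega) := by
      intro k hk
      rw [← List.getElem_ofFn (f := f) (i := k) (by simp; omega)]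
      exact List.getElem_of_eq hf _
    have hfa : f ⟨l₁.length, by omega⟩ = a := by
      rw [hfj, get_two, dif_neg (lt_irrefl _), dif_pos rfl]
    have hfb : f ⟨l₁.length + 1, by omega⟩ = b := by
      rw [hfj, get_two, dif_neg (by omega), dif_neg (by omega), dif_pos rfl]
    have key : f' = braidMove l₁.length hi f := by
      apply List.ofFn_injective
      rw [hf']
      apply List.ext_getElem (by simp; omega)
      intro j hj hj'
      have hjN : j < N := by simp at hj; omega
      rw [List.getElem_ofFn, braidMove_mk, get_two]
      by_cases h1 : j = l₁.length
      · subst h1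
        rw [dif_neg (lt_irrefl _), dif_pos rfl, if_pos rfl, hfa, hfb]
      · by_cases h2 : j = l₁.length + 1
        · subst h2
          rw [dif_neg (by omega), dif_neg h1, dif_pos rfl, if_neg h1, if_pos rfl, hfa]
        · rw [if_neg h1, if_neg h2, hfj _ hjN, get_two]
          by_cases h3 : j < l₁.length
          · rw [dif_pos h3, dif_pos h3]
          · rw [dif_neg h3, dif_neg h1, dif_neg h2, dif_neg h3, dif_neg h1, dif_neg h2]
    rw [key]
    exact Relation.EqvGen.rel _ _ ⟨l₁.length, hi, rfl⟩
  | refl x =>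
    intro f f' hf hf'
    have : f = f' := List.ofFn_injective (hf.trans hf'.symm)
    rw [this]; exact Relation.EqvGen.refl _
  | symm x y _ ih =>
    intro f f' hf hf'
    exact Relation.EqvGen.symm _ _ (ih f' f hf' hf)
  | trans x y z hxy _ ih1 ih2 =>
    intro f f' hf hf'
    have hx : x.length = N := by rw [← hf]; simp
    have hy : y.length = N := (LEquiv.length hxy).symm.trans hx
    have hofm : List.ofFn (fun j : Fin N => y.get (Fin.cast hy.symm j)) = y := by
      rw [← List.ofFn_congr hy y.get, List.ofFn_get]
    exact Relation.EqvGen.trans _ _ _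
      (ih1 f _ hf hofm) (ih2 _ f' hofm hf')

end Aux

/-- If `(g_1,…,g_n) ∈ c^n` has trivial global monodromy, then for any
`(h_1,…,h_m) ∈ c^m` the concatenations `(g,h)` and `(h,g)` are equivalent under
the braid group action. -/
theorem braidEquiv_append_comm {G : Type*} [Group G] (c : Set G)
    (hc : ∀ g ∈ c, ∀ h ∈ c, g * h * g⁻¹ ∈ c) {n m : ℕ}
    (g : Fin n → G) (h : Fin m → G) (hgc : ∀ j, g j ∈ c) (hhc : ∀ j, h j ∈ c)
    (hmono : (List.ofFn g).prod = 1) :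
    BraidEquiv (Fin.append g h) (Fin.append h g ∘ Fin.cast (Nat.add_comm n m)) := by
  apply lequiv_braidEquiv (l := List.ofFn g ++ List.ofFn h) (l' := List.ofFn h ++ List.ofFn g)
  · have e := moveList (List.ofFn g) (List.ofFn h)
    rw [hmono] at e
    simpa [Function.comp_def] using e
  · exact List.ofFn_fin_append g h
  · show List.ofFn (fun i : Fin (n + m) => Fin.append h g (Fin.cast (Nat.add_comm m n).symm i)) = _
    rw [← List.ofFn_congr (Nat.add_comm m n) (Fin.append h g), List.ofFn_fin_append]
end
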